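/- Let f : A → B be a homomorphism of finitely generated abelian groups whose restriction to the torsion subgroup Tor(A) → Tor(B) is the zero map. Then the induced map Ext^1_ℤ(B, ℤ) → Ext^1_ℤ(A, ℤ) is the zero map. -/

import Mathlib

open CategoryTheory

/-- If `f : A → B` is a homomorphism of finitely generated abelian groups that vanishes on
the torsion subgroup of... rather, restricts to the zero map `Tor(A) → Tor(B)`, then the
induced map `Ext¹_ℤ(B, ℤ) → Ext¹_ℤ(A, ℤ)` is zero. -/
theorem ext_map_zero_of_torsion_zero (A B : Type) [AddCommGroup A] [AddCommGroup B]
    [AddGroup.FG A] [AddGroup.FG B] (f : A →+ B)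
    (hf : ∀ a : A, IsOfFinAddOrder a → f a = 0) :
    ((Ext ℤ (ModuleCat ℤ) 1).map
        (ModuleCat.ofHom f.toIntLinearMap : ModuleCat.of ℤ A ⟶ ModuleCat.of ℤ B).op).app
      (ModuleCat.of ℤ ℤ) = 0 := by
  -- the torsion-free quotient
  set T := Submodule.torsion ℤ A with hT
  have hker : T ≤ LinearMap.ker f.toIntLinearMap := by
    intro x hx
    have hfin : IsOfFinAddOrder x := by
      have := Submodule.torsion_int (G := A)
      have hx' : x ∈ (Submodule.torsion ℤ A).toAddSubgroup := hx
      rw [this] at hx'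
      exact hx'
    exact hf x hfin
  haveI : Module.Finite ℤ A := Module.Finite.iff_addGroup_fg.mpr ‹AddGroup.FG A›
  haveI : Module.Finite ℤ (A ⧸ T) := Module.Finite.quotient ℤ T
  haveI : Module.IsTorsionFree ℤ (A ⧸ T) := Submodule.QuotientTorsion.instIsTorsionFree
  haveI : Module.Free ℤ (A ⧸ T) := Module.free_of_finite_type_torsion_free'
  haveI : Projective (ModuleCat.of ℤ (A ⧸ T)) :=
    (IsProjective.iff_projective _).mp (Module.Projective.of_free)
  -- factor f through the quotient
  set g : (A ⧸ T) →ₗ[ℤ] B := T.liftQ f.toIntLinearMap hker with hg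
  have hfac : f.toIntLinearMap = g.comp T.mkQ := by
    ext x; simp [hg]
  have hfac' : (ModuleCat.ofHom f.toIntLinearMap : ModuleCat.of ℤ A ⟶ ModuleCat.of ℤ B) =
      (ModuleCat.ofHom T.mkQ : ModuleCat.of ℤ A ⟶ ModuleCat.of ℤ (A ⧸ T)) ≫
        ModuleCat.ofHom g := by
    rw [hfac]; rfl
  rw [hfac']
  have hz : Limits.IsZero (((Ext ℤ (ModuleCat ℤ) 1).obj
      (Opposite.op (ModuleCat.of ℤ (A ⧸ T)))).obj (ModuleCat.of ℤ ℤ)) :=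
    isZero_Ext_succ_of_projective _ _ 0
  rw [op_comp, Functor.map_comp, NatTrans.comp_app]
  rw [hz.eq_of_src (((Ext ℤ (ModuleCat ℤ) 1).map
      (ModuleCat.ofHom (Submodule.mkQ T)).op).app (ModuleCat.of ℤ ℤ)) 0]
  simp
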